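/- There exists a universal constant c > 0 such that for every λ > 0 and every integer n ≥ λ, if X is a Poisson random variable with mean λ, then P(X = n) ≥ (c/√n)·exp(-(n-λ)²/λ). -/

import Mathlib

open MeasureTheory ProbabilityTheory

lemma factorial_le_stirling_bound (n : ℕ) (hn : 1 ≤ n) :
    (n.factorial : ℝ) ≤ Real.exp 1 * Real.sqrt n * ((n : ℝ) / Real.exp 1) ^ n := by
  obtain ⟨m, rfl⟩ := Nat.exists_eq_add_of_le hn
  have hpos : 0 < Stirling.stirlingSeq (1 + m) := by
    rw [add_comm]; exact Stirling.stirlingSeq'_pos m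
  have hlog : Real.log (Stirling.stirlingSeq (1 + m)) ≤
      Real.log (Stirling.stirlingSeq 1) := by
    have := Stirling.log_stirlingSeq'_antitone (Nat.zero_le m)
    simpa [Function.comp, Nat.succ_eq_add_one, add_comm] using this
  have hle : Stirling.stirlingSeq (1 + m) ≤ Stirling.stirlingSeq 1 := by
    rwa [Real.log_le_log_iff hpos (by rw [Stirling.stirlingSeq_one]; positivity)] at hlog
  rw [Stirling.stirlingSeq_one] at hle
  set n := 1 + m with hn'
  have hnpos : (0:ℝ) < n := by positivity
  have hdenom : (0:ℝ) < Real.sqrt (2 * n) * ((n : ℝ) / Real.exp 1) ^ n := by positivity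
  rw [Stirling.stirlingSeq, div_le_iff₀ hdenom] at hle
  calc (n.factorial : ℝ) ≤ Real.exp 1 / Real.sqrt 2 *
        (Real.sqrt (2 * n) * ((n : ℝ) / Real.exp 1) ^ n) := hle
    _ = Real.exp 1 * Real.sqrt n * ((n : ℝ) / Real.exp 1) ^ n := by
        rw [show (2 * n : ℝ) = 2 * n by norm_num, Real.sqrt_mul (by norm_num : (0:ℝ) ≤ 2)]
        have h2 : Real.sqrt 2 ≠ 0 := by positivity
        field_simp

/-- There exists a universal constant `c > 0` such that for every `λ > 0` and
every integer `n ≥ λ`, if `X` is a Poisson random variable with mean `λ`, then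
`P(X = n) ≥ (c/√n)·exp(-(n-λ)²/λ)`. -/
theorem poisson_point_lower_bound :
    ∃ c : ℝ, 0 < c ∧
      ∀ (Ω : Type) (_ : MeasureSpace Ω), IsProbabilityMeasure (ℙ : Measure Ω) →
      ∀ (lam : ℝ), 0 < lam →
      ∀ (X : Ω → ℕ), Measurable X →
      (∀ m : ℕ, ℙ {ω | X ω = m} =
        ENNReal.ofReal (Real.exp (-lam) * lam ^ m / (Nat.factorial m))) →
      ∀ n : ℕ, lam ≤ n →
        ENNReal.ofReal (c / Real.sqrt n * Real.exp (-((n : ℝ) - lam) ^ 2 / lam)) ≤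
          ℙ {ω | X ω = n} := by
  refine ⟨Real.exp (-1), Real.exp_pos _, ?_⟩
  intro Ω _ _ lam hlam X _ hX n hn
  rw [hX n]
  apply ENNReal.ofReal_le_ofReal
  have hn1 : 1 ≤ n := by
    by_contra h
    push_neg at h
    interval_cases n
    simp at hn
    linarith
  have hnpos : (0:ℝ) < n := by exact_mod_cast hn1
  have hfac : (n.factorial : ℝ) ≤ Real.exp 1 * Real.sqrt n * ((n : ℝ) / Real.exp 1) ^ n :=
    factorial_le_stirling_bound n hn1
  have hfacpos : (0:ℝ) < n.factorial := by exact_mod_cast n.factorial_pos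
  -- key exponent inequality
  have hlog : Real.log ((n : ℝ) / lam) ≤ (n : ℝ) / lam - 1 :=
    Real.log_le_sub_one_of_pos (div_pos hnpos hlam)
  have key : (n : ℝ) * Real.log ((n : ℝ) / lam) ≤
      ((n : ℝ) - lam) ^ 2 / lam + ((n : ℝ) - lam) := by
    have h1 : (n : ℝ) * Real.log ((n : ℝ) / lam) ≤ (n : ℝ) * ((n : ℝ) / lam - 1) :=
      mul_le_mul_of_nonneg_left hlog (le_of_lt hnpos)
    have h2 : (n : ℝ) * ((n : ℝ) / lam - 1) = ((n : ℝ) - lam) ^ 2 / lam + ((n : ℝ) - lam) := by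
      field_simp
      ring
    linarith
  -- key2 : (n/e)^n * exp(-(n-λ)²/λ) ≤ exp(-λ) * λ^n
  have key2 : ((n : ℝ) / Real.exp 1) ^ n * Real.exp (-((n : ℝ) - lam) ^ 2 / lam) ≤
      Real.exp (-lam) * lam ^ n := by
    have hL : ((n : ℝ) / Real.exp 1) ^ n =
        Real.exp ((n : ℝ) * (Real.log n - 1)) := by
      rw [← Real.exp_log (x := ((n : ℝ) / Real.exp 1) ^ n) (by positivity),
        Real.log_pow, Real.log_div (ne_of_gt hnpos) (Real.exp_ne_zero 1), Real.log_exp]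
    have hR : lam ^ n = Real.exp ((n : ℝ) * Real.log lam) := by
      rw [← Real.exp_log (x := lam ^ n) (by positivity), Real.log_pow]
    rw [hL, hR, ← Real.exp_add, ← Real.exp_add]
    apply Real.exp_le_exp.mpr
    have hlogdiv : Real.log ((n : ℝ) / lam) = Real.log n - Real.log lam :=
      Real.log_div (ne_of_gt hnpos) (ne_of_gt hlam)
    rw [hlogdiv] at key
    have hneg : -((n:ℝ) - lam) ^ 2 / lam = -((((n:ℝ) - lam) ^ 2) / lam) := neg_div _ _
    rw [hneg]
    linarith [key]
  -- assemble
  have hs : (0:ℝ) < Real.sqrt n := Real.sqrt_pos.mpr hnpos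
  have step1 : Real.exp (-lam) * lam ^ n / (Real.exp 1 * Real.sqrt n * ((n : ℝ) / Real.exp 1) ^ n)
      ≤ Real.exp (-lam) * lam ^ n / (n.factorial : ℝ) := by
    apply div_le_div_of_nonneg_left (by positivity) hfacpos hfac
  refine le_trans ?_ step1
  rw [div_mul_eq_mul_div, div_le_div_iff₀ hs (by positivity)]
  have he : Real.exp (-1) * Real.exp 1 = 1 := by
    rw [← Real.exp_add]; norm_num
  calc Real.exp (-1) * Real.exp (-((n : ℝ) - lam) ^ 2 / lam) *
        (Real.exp 1 * Real.sqrt n * ((n : ℝ) / Real.exp 1) ^ n)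
      = Real.sqrt n * ((Real.exp (-1) * Real.exp 1) *
        (((n : ℝ) / Real.exp 1) ^ n * Real.exp (-((n : ℝ) - lam) ^ 2 / lam))) := by ring
    _ = Real.sqrt n * (((n : ℝ) / Real.exp 1) ^ n * Real.exp (-((n : ℝ) - lam) ^ 2 / lam)) := by
        rw [he, one_mul]
    _ ≤ Real.sqrt n * (Real.exp (-lam) * lam ^ n) :=
        mul_le_mul_of_nonneg_left key2 hs.le
    _ = Real.exp (-lam) * lam ^ n * Real.sqrt n := by ring
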